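/- Assume θ(i)≠i for all i∈I. Then for each i∈I, every element u of V_θ(λ) can be written uniquely as a finite sum u = Σ_{n≥0} F_i^{(n)} u_n where u_n∈V_θ(λ), E_i u_n = 0 for all n, and u_n = 0 for all but finitely many n. (In particular E_i acts locally nilpotently on V_θ(λ).) -/

import Mathlib

set_option synthInstance.maxHeartbeats 1000000
set_option maxHeartbeats 1000000

noncomputable section
open scoped BigOperators TensorProduct

abbrev KK : Type := RatFunc ℚ

def qq : KK := RatFunc.X

def qZ (n : ℤ) : KK := qq ^ n

def qInt (d : ℤ) (k : ℕ) : KK := (qq ^ (d * k) - qq ^ (-(d * k : ℤ))) / (qq ^ d - qq ^ (-d : ℤ))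

def qFact (d : ℤ) (k : ℕ) : KK := ∏ m ∈ Finset.range k, qInt d (m + 1)

variable {I : Type} [DecidableEq I]

/-- `b = 1 - (α_i^∨, α_j)` -/
def serreN (A : I → I → ℤ) (i j : I) : ℕ := (1 - 2 * A i j / A i i).toNat

/-- the `q`-Serre element `Σ_k (-1)^k x_i^{(k)} x_j x_i^{(b-k)}` attached to a family
`x : I → R` of elements of a `K`-algebra `R`. -/
def serreElt (A : I → I → ℤ) {R : Type} [Ring R] [Algebra KK R] (x : I → R) (i j : I) : R :=
  ∑ k ∈ Finset.range (serreN A i j + 1),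
    ((-1 : KK) ^ k * (qFact (A i i / 2) k)⁻¹ * (qFact (A i i / 2) (serreN A i j - k))⁻¹) •
      (x i ^ k * x j * x i ^ (serreN A i j - k))

inductive SerreRel (A : I → I → ℤ) : FreeAlgebra KK I → FreeAlgebra KK I → Prop
  | serre (i j : I) (h : i ≠ j) : SerreRel A (serreElt A (FreeAlgebra.ι KK) i j) 0

abbrev Um (A : I → I → ℤ) : Type := RingQuot (SerreRel A)

def fgen (A : I → I → ℤ) (i : I) : Um A := RingQuot.mkAlgHom KK (SerreRel A) (FreeAlgebra.ι KK i)

def fdiv (A : I → I → ℤ) (i : I) (n : ℕ) : Um A :=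
  (qFact (A i i / 2) n)⁻¹ • (fgen A i) ^ n

def IsCartan (A : I → I → ℤ) : Prop :=
  (∀ i j, A i j = A j i) ∧ (∀ i, 0 < A i i) ∧ (∀ i, 2 ∣ A i i) ∧
  (∀ i j, i ≠ j → A i j ≤ 0) ∧ (∀ i j, A i i ∣ 2 * A i j)

/-- `θ` is a Dynkin-diagram involution. -/
def IsTheta (A : I → I → ℤ) (θ : I → I) : Prop :=
  (∀ i, θ (θ i) = i) ∧ (∀ i j, A (θ i) (θ j) = A i j)

/-- generators of `B_θ(g)`: `E_i`, `F_i`, `T_i` and `T_i⁻¹`. -/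
inductive BGen (I : Type) : Type
  | E : I → BGen I
  | F : I → BGen I
  | T : I → BGen I
  | Ti : I → BGen I

def bE (i : I) : FreeAlgebra KK (BGen I) := FreeAlgebra.ι KK (BGen.E i)
def bF (i : I) : FreeAlgebra KK (BGen I) := FreeAlgebra.ι KK (BGen.F i)
def bT (i : I) : FreeAlgebra KK (BGen I) := FreeAlgebra.ι KK (BGen.T i)
def bTi (i : I) : FreeAlgebra KK (BGen I) := FreeAlgebra.ι KK (BGen.Ti i)

/-- the defining relations of `B_θ(g)`. -/
inductive BRel (A : I → I → ℤ) (θ : I → I) :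
    FreeAlgebra KK (BGen I) → FreeAlgebra KK (BGen I) → Prop
  | T_inv_right (i : I) : BRel A θ (bT i * bTi i) 1
  | T_inv_left (i : I) : BRel A θ (bTi i * bT i) 1
  | T_comm (i j : I) : BRel A θ (bT i * bT j) (bT j * bT i)
  | T_theta (i : I) : BRel A θ (bT (θ i)) (bT i)
  | Ti_theta (i : I) : BRel A θ (bTi (θ i)) (bTi i)
  | TE (i j : I) : BRel A θ (bT i * bE j) (qZ (A i j + A (θ i) j) • (bE j * bT i))
  | TF (i j : I) : BRel A θ (bT i * bF j) (qZ (-(A i j + A (θ i) j)) • (bF j * bT i))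
  | EF (i j : I) : BRel A θ (bE i * bF j)
      (qZ (-(A i j)) • (bF j * bE i) + (if i = j then 1 else 0) +
        (if θ i = j then bT i else 0))
  | Eserre (i j : I) (h : i ≠ j) : BRel A θ (serreElt A bE i j) 0
  | Fserre (i j : I) (h : i ≠ j) : BRel A θ (serreElt A bF i j) 0

abbrev Bth (A : I → I → ℤ) (θ : I → I) : Type := RingQuot (BRel A θ)

def Eg (A : I → I → ℤ) (θ : I → I) (i : I) : Bth A θ :=
  RingQuot.mkAlgHom KK (BRel A θ) (bE i)
def Fg (A : I → I → ℤ) (θ : I → I) (i : I) : Bth A θ :=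
  RingQuot.mkAlgHom KK (BRel A θ) (bF i)
def Tg (A : I → I → ℤ) (θ : I → I) (i : I) : Bth A θ :=
  RingQuot.mkAlgHom KK (BRel A θ) (bT i)
def Tig (A : I → I → ℤ) (θ : I → I) (i : I) : Bth A θ :=
  RingQuot.mkAlgHom KK (BRel A θ) (bTi i)

/-- a dominant integral `θ`-invariant weight `λ`, recorded through the pairings
`lam i = (α_i, λ)`. -/
def IsDomWt (A : I → I → ℤ) (θ : I → I) (lam : I → ℤ) : Prop :=
  (∀ i, 0 ≤ lam i) ∧ (∀ i, A i i ∣ 2 * lam i) ∧ (∀ i, lam (θ i) = lam i)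

/-- a representation of `B_θ(g)` together with a marked vector. -/
structure BRep (A : I → I → ℤ) (θ : I → I) where
  carrier : Type
  [ag : AddCommGroup carrier]
  [mo : Module KK carrier]
  rho : Bth A θ →ₐ[KK] Module.End KK carrier
  vac : carrier

attribute [instance] BRep.ag BRep.mo

variable {A : I → I → ℤ} {θ : I → I}

/-- `M` is a highest weight module `V_θ(λ)`:  `E_i φ_λ = 0`, `T_i φ_λ = q^{(α_i,λ)} φ_λ`,
`M` is generated by `φ_λ`, and `{u : E_i u = 0 ∀i} = K φ_λ`. -/
def IsVtheta (A : I → I → ℤ) (θ : I → I) (lam : I → ℤ) (M : BRep A θ) : Prop :=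
  (∀ i, M.rho (Eg A θ i) M.vac = 0) ∧
  (∀ i, M.rho (Tg A θ i) M.vac = qZ (lam i) • M.vac) ∧
  (∀ W : Submodule KK M.carrier,
    (∀ x : Bth A θ, ∀ w ∈ W, M.rho x w ∈ W) → M.vac ∈ W → W = ⊤) ∧
  (∀ u : M.carrier, (∀ i, M.rho (Eg A θ i) u = 0) ↔ ∃ c : KK, u = c • M.vac)

/-- irreducibility of a `B_θ(g)`-module. -/
def IsIrrep (M : BRep A θ) : Prop :=
  (∃ v : M.carrier, v ≠ 0) ∧
  ∀ W : Submodule KK M.carrier,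
    (∀ x : Bth A θ, ∀ w ∈ W, M.rho x w ∈ W) → W = ⊥ ∨ W = ⊤

/-- the divided power `F_i^{(n)}` acting on a representation `M`. -/
def Fpow (lam : I → ℤ) (M : BRep A θ) (i : I) (n : ℕ) : Module.End KK M.carrier :=
  (qFact (A i i / 2) n)⁻¹ • (M.rho (Fg A θ i)) ^ n


-- === auxiliary lemmas ===

lemma qq_ne_zero : qq ≠ 0 := RatFunc.X_ne_zero
lemma qZ_ne_zero (n : ℤ) : qZ n ≠ 0 := zpow_ne_zero _ qq_ne_zero
lemma qZ_add (m n : ℤ) : qZ (m + n) = qZ m * qZ n := zpow_add₀ qq_ne_zero _ _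
lemma qZ_zero : qZ 0 = 1 := rfl

lemma qq_pow_ne_one {n : ℕ} (h : n ≠ 0) : qq ^ n ≠ 1 := by
  have : qq ^ n = algebraMap (Polynomial ℚ) KK (Polynomial.X ^ n) := by
    simp [qq, map_pow, RatFunc.algebraMap_X]
  rw [this]
  intro hc
  have h1 : (Polynomial.X ^ n : Polynomial ℚ) = 1 := by
    apply RatFunc.algebraMap_injective ℚ
    rw [hc, map_one]
  have := congrArg Polynomial.natDegree h1
  simp [Polynomial.natDegree_X_pow] at this
  exact h this

lemma qZ_eq_one_iff {n : ℤ} : qZ n = 1 ↔ n = 0 := by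
  constructor
  · intro h
    by_contra hn
    rcases lt_or_gt_of_ne hn with hlt | hgt
    · have : qZ (-n) = 1 := by
        have := congrArg (· * qZ (-n)) h
        simpa [← qZ_add, qZ_zero] using this.symm
      have hn' : (-n).toNat ≠ 0 := by omega
      apply qq_pow_ne_one hn'
      rw [← this, qZ, ← zpow_natCast, Int.toNat_of_nonneg (by omega)]
    · have hn' : n.toNat ≠ 0 := by omega
      apply qq_pow_ne_one hn'
      rw [← h, qZ, ← zpow_natCast, Int.toNat_of_nonneg (by omega)]
  · rintro rfl; rfl

lemma qZ_sub_ne_zero {m n : ℤ} (h : m ≠ n) : qZ m - qZ n ≠ 0 := by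
  intro hc
  have hmn : qZ m = qZ n := by linear_combination hc
  have : qZ (m - n) = 1 := by
    rw [sub_eq_add_neg, qZ_add, hmn, ← qZ_add]
    simp [qZ_zero]
  rw [qZ_eq_one_iff] at this
  omega

lemma qInt_ne_zero {d : ℤ} (hd : 0 < d) {k : ℕ} (hk : 0 < k) : qInt d k ≠ 0 := by
  have h1 : (qq ^ (d * k) - qq ^ (-(d * k : ℤ)) : KK) ≠ 0 := qZ_sub_ne_zero (by
    have hk' : (0:ℤ) < k := by exact_mod_cast hk
    have := mul_pos hd hk'
    omega)
  have h2 : (qq ^ (d : ℤ) - qq ^ (-d : ℤ) : KK) ≠ 0 := qZ_sub_ne_zero (by omega)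
  exact div_ne_zero h1 h2

lemma qFact_ne_zero {d : ℤ} (hd : 0 < d) (k : ℕ) : qFact d k ≠ 0 := by
  apply Finset.prod_ne_zero_iff.2
  intro m _
  exact qInt_ne_zero hd (Nat.succ_pos m)

lemma geom_ne_zero {d : ℤ} (hd : 0 < d) (n : ℕ) :
    (∑ k ∈ Finset.range (n + 1), (qZ (-(2 * d))) ^ k) ≠ 0 := by
  intro hc
  have := geom_sum_mul (qZ (-(2 * d))) (n + 1)
  rw [hc, zero_mul] at this
  have h1 : qZ (-(2 * d)) ^ (n + 1) = qZ (-(2 * d) * (n + 1)) := by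
    rw [qZ, qZ, ← zpow_natCast (qq ^ (-(2*d))), ← zpow_mul]
    push_cast
    ring_nf
  rw [h1] at this
  have : qZ (-(2 * d) * (n + 1)) = 1 := by linear_combination -this
  rw [qZ_eq_one_iff] at this
  have : (n:ℤ) + 1 > 0 := by positivity
  nlinarith [this]


section Abstract

variable {V : Type} [AddCommGroup V] [Module KK V]

/-- divided power of `F` -/
noncomputable def Fd (F : Module.End KK V) (d : ℤ) (n : ℕ) : Module.End KK V :=
  (qFact d n)⁻¹ • F ^ n

/-- the scalar with `E F^{(n+1)} v = γ_n F^{(n)} v` on `ker E`. -/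
noncomputable def gam (d : ℤ) (n : ℕ) : KK :=
  (qFact d (n + 1))⁻¹ * (∑ k ∈ Finset.range (n + 1), (qZ (-(2 * d))) ^ k) * qFact d n

lemma qFact_zero (d : ℤ) : qFact d 0 = 1 := by simp [qFact]

lemma Fd_zero (F : Module.End KK V) (d : ℤ) : Fd F d 0 = 1 := by
  simp [Fd, qFact_zero]

lemma gam_ne_zero {d : ℤ} (hd : 0 < d) (n : ℕ) : gam d n ≠ 0 := by
  unfold gam
  exact mul_ne_zero (mul_ne_zero (inv_ne_zero (qFact_ne_zero hd _)) (geom_ne_zero hd n))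
    (qFact_ne_zero hd n)

variable (E F : Module.End KK V) (d : ℤ)

lemma comm1 (hEF : E * F = qZ (-(2 * d)) • (F * E) + 1) (n : ℕ) :
    E * F ^ (n + 1) = (qZ (-(2 * d))) ^ (n + 1) • (F ^ (n + 1) * E) +
      (∑ k ∈ Finset.range (n + 1), (qZ (-(2 * d))) ^ k) • F ^ n := by
  induction n with
  | zero => simpa using hEF
  | succ n ih =>
    have key : F ^ (n + 1) * (E * F) = qZ (-(2 * d)) • (F ^ (n + 2) * E) + F ^ (n + 1) := by
      rw [hEF, mul_add, mul_one, mul_smul_comm, ← mul_assoc, ← pow_succ]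
    have h2 : E * F ^ (n + 2) = (E * F ^ (n + 1)) * F := by rw [mul_assoc, ← pow_succ]
    rw [h2, ih, add_mul, smul_mul_assoc, smul_mul_assoc, mul_assoc, key, ← pow_succ,
      smul_add, smul_smul, ← pow_succ]
    conv_rhs => rw [Finset.sum_range_succ]
    rw [add_smul, add_assoc]
    congr 1
    rw [add_comm]

lemma E_Fd_succ (hd : 0 < d) (hEF : E * F = qZ (-(2 * d)) • (F * E) + 1) (n : ℕ) (v : V)
    (hv : E v = 0) : E (Fd F d (n + 1) v) = gam d n • Fd F d n v := by
  have h1 : E (Fd F d (n + 1) v) = (qFact d (n + 1))⁻¹ • (E * F ^ (n + 1)) v := by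
    simp [Fd, Module.End.mul_apply]
  rw [h1, comm1 E F d hEF n]
  simp only [LinearMap.add_apply, LinearMap.smul_apply, Module.End.mul_apply, hv, map_zero,
    smul_zero, zero_add, Fd, gam, smul_smul]
  congr 1
  field_simp
  rw [mul_div_mul_right _ _ (qFact_ne_zero hd n)]

lemma Epow_Fd (hd : 0 < d) (hEF : E * F = qZ (-(2 * d)) • (F * E) + 1) (m n : ℕ) (v : V)
    (hv : E v = 0) :
    (E ^ m) (Fd F d (n + m) v) = (∏ j ∈ Finset.Ico n (n + m), gam d j) • Fd F d n v := by
  induction m generalizing n with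
  | zero => simp
  | succ m ih =>
    have h1 : (E ^ (m + 1)) (Fd F d (n + (m + 1)) v) = (E ^ m) (E (Fd F d ((n + m) + 1) v)) := by
      rw [pow_succ, Module.End.mul_apply]
      rfl
    rw [h1, E_Fd_succ E F d hd hEF _ v hv, map_smul, ih, smul_smul,
      show n + (m + 1) = (n + m) + 1 by omega, Finset.prod_Ico_succ_top (by omega)]
    ring_nf

lemma Epow_Fd_self (hd : 0 < d) (hEF : E * F = qZ (-(2 * d)) • (F * E) + 1) (n : ℕ) (v : V)
    (hv : E v = 0) :
    (E ^ n) (Fd F d n v) = (∏ j ∈ Finset.range n, gam d j) • v := by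
  have := Epow_Fd E F d hd hEF n 0 v hv
  simp only [zero_add] at this
  rw [this]
  congr 1
  · rw [Finset.range_eq_Ico]
  · rw [Fd_zero, Module.End.one_apply]

lemma Epow_Fd_zero (hd : 0 < d) (hEF : E * F = qZ (-(2 * d)) • (F * E) + 1) {m n : ℕ} (v : V)
    (hv : E v = 0) (h : n < m) : (E ^ m) (Fd F d n v) = 0 := by
  obtain ⟨t, rfl⟩ : ∃ t, m = n + 1 + t := ⟨m - n - 1, by omega⟩
  have : E ^ (n + 1 + t) = E ^ t * (E * E ^ n) := by
    rw [← pow_succ']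
    rw [← pow_add]
    congr 1
    omega
  rw [this, Module.End.mul_apply, Module.End.mul_apply, Epow_Fd_self E F d hd hEF n v hv,
    map_smul, hv, smul_zero, map_zero]

lemma uniq_aux (hd : 0 < d) (hEF : E * F = qZ (-(2 * d)) • (F * E) + 1) :
    ∀ (N : ℕ) (f : ℕ → V), (∀ n, E (f n) = 0) →
      (∑ n ∈ Finset.range (N + 1), Fd F d n (f n)) = 0 → ∀ n ≤ N, f n = 0 := by
  intro N
  induction N with
  | zero =>
    intro f hf hsum n hn
    interval_cases n
    simpa [Fd_zero] using hsum
  | succ N ih =>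
    intro f hf hsum n hn
    have htop : f (N + 1) = 0 := by
      have h0 := congrArg (E ^ (N + 1)) hsum
      rw [map_sum, map_zero] at h0
      rw [Finset.sum_range_succ] at h0
      have hz : ∀ n ∈ Finset.range (N + 1), (E ^ (N + 1)) (Fd F d n (f n)) = 0 := by
        intro n hn
        exact Epow_Fd_zero E F d hd hEF (f n) (hf n) (Finset.mem_range.1 hn)
      rw [Finset.sum_eq_zero hz, zero_add, Epow_Fd_self E F d hd hEF _ _ (hf _)] at h0
      have hne : (∏ j ∈ Finset.range (N + 1), gam d j) ≠ 0 :=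
        Finset.prod_ne_zero_iff.2 fun j _ => gam_ne_zero hd j
      exact (smul_eq_zero.1 h0).resolve_left hne
    rcases Nat.lt_or_ge n (N + 1) with h | h
    · apply ih f hf _ n (by omega)
      rw [Finset.sum_range_succ, htop, map_zero, add_zero] at hsum
      exact hsum
    · have : n = N + 1 := by omega
      rw [this]; exact htop

lemma exist_aux (hd : 0 < d) (hEF : E * F = qZ (-(2 * d)) • (F * E) + 1) :
    ∀ (N : ℕ) (u : V), (E ^ (N + 1)) u = 0 →
      ∃ f : ℕ → V, (∀ n, E (f n) = 0) ∧ (∀ n, N < n → f n = 0) ∧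
        u = ∑ n ∈ Finset.range (N + 1), Fd F d n (f n) := by
  intro N
  induction N with
  | zero =>
    intro u hu
    refine ⟨fun n => if n = 0 then u else 0, ?_, ?_, ?_⟩
    · intro n
      by_cases h : n = 0 <;> simp [h]
      simpa using hu
    · intro n hn
      have h : n ≠ 0 := by omega
      simp [h]
    · simp [Fd_zero]
  | succ N ih =>
    intro u hu
    set v := (E ^ (N + 1)) u with hv
    have hEv : E v = 0 := by
      rw [hv, ← Module.End.mul_apply, ← pow_succ']
      exact hu
    set w := (∏ j ∈ Finset.range (N + 1), gam d j)⁻¹ • v with hw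
    have hEw : E w = 0 := by rw [hw, map_smul, hEv, smul_zero]
    have hne : (∏ j ∈ Finset.range (N + 1), gam d j) ≠ 0 :=
      Finset.prod_ne_zero_iff.2 fun j _ => gam_ne_zero hd j
    have hu' : (E ^ (N + 1)) (u - Fd F d (N + 1) w) = 0 := by
      rw [map_sub, Epow_Fd_self E F d hd hEF _ _ hEw, hw, smul_smul, mul_inv_cancel₀ hne,
        one_smul, ← hv, sub_self]
    obtain ⟨f, hf1, hf2, hf3⟩ := ih _ hu'
    refine ⟨fun n => if n = N + 1 then w else f n, ?_, ?_, ?_⟩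
    · intro n
      by_cases h : n = N + 1 <;> simp [h, hEw, hf1]
    · intro n hn
      have h : n ≠ N + 1 := by omega
      simp [h, hf2 n (by omega)]
    · rw [Finset.sum_range_succ]
      simp only [if_pos rfl]
      have : ∑ n ∈ Finset.range (N + 1), Fd F d n (if n = N + 1 then w else f n) =
          ∑ n ∈ Finset.range (N + 1), Fd F d n (f n) := by
        apply Finset.sum_congr rfl
        intro n hn
        rw [if_neg (by have := Finset.mem_range.1 hn; omega)]
      rw [this, ← hf3]
      abel_nf
      simp

end Abstract


section Main


lemma uniq_finsupp {V : Type} [AddCommGroup V] [Module KK V] (E F : Module.End KK V) (d : ℤ)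
    (hd : 0 < d) (hEF : E * F = qZ (-(2 * d)) • (F * E) + 1) (c : ℕ →₀ V)
    (hc : ∀ n, E (c n) = 0) (hsum : (c.sum fun n x => Fd F d n x) = 0) : c = 0 := by
  set N := c.support.sup id with hN
  have hsub : c.support ⊆ Finset.range (N + 1) := by
    intro n hn
    exact Finset.mem_range.2 (Nat.lt_succ_of_le (Finset.le_sup (f := id) hn))
  rw [Finsupp.sum_of_support_subset c hsub _ (fun i _ => map_zero _)] at hsum
  have h := uniq_aux E F d hd hEF N (fun n => c n) hc hsum
  ext n
  rcases le_or_gt n N with h1 | h1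
  · simpa using h n h1
  · by_contra hne
    have hmem : n ∈ c.support := Finsupp.mem_support_iff.2 (by simpa using hne)
    have := Finset.mem_range.1 (hsub hmem)
    omega

lemma pow_app_zero_mono {V : Type} [AddCommGroup V] [Module KK V] (E : Module.End KK V)
    {N m : ℕ} (h : N ≤ m) {v : V} (hv : (E ^ N) v = 0) : (E ^ m) v = 0 := by
  obtain ⟨t, rfl⟩ := Nat.exists_eq_add_of_le h
  rw [add_comm, pow_add, Module.End.mul_apply, hv, map_zero]

lemma comm_pow {V : Type} [AddCommGroup V] [Module KK V] (E G : Module.End KK V) (s : KK)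
    (h : E * G = s • (G * E)) (N : ℕ) : E ^ N * G = s ^ N • (G * E ^ N) := by
  induction N with
  | zero => simp
  | succ N ih =>
    rw [pow_succ, mul_assoc, h, mul_smul_comm, ← mul_assoc, ih, smul_mul_assoc, smul_smul,
      mul_assoc, ← pow_succ, ← pow_succ']

lemma nil_comm {V : Type} [AddCommGroup V] [Module KK V] (E G : Module.End KK V) (s : KK)
    (h : E * G = s • (G * E)) {N : ℕ} {v : V} (hv : (E ^ N) v = 0) : (E ^ N) (G v) = 0 := by
  rw [← Module.End.mul_apply, comm_pow E G s h N, LinearMap.smul_apply, Module.End.mul_apply,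
    hv, map_zero, smul_zero]

lemma nil_D {V : Type} [AddCommGroup V] [Module KK V] (E G D : Module.End KK V) (s t : KK)
    (h : E * G = s • (G * E) + D) (hD : E * D = t • (D * E)) :
    ∀ N, ∀ v : V, (E ^ N) v = 0 → (E ^ (N + 1)) (G v) = 0 := by
  intro N
  induction N with
  | zero =>
    intro v hv
    have hv0 : v = 0 := by simpa using hv
    simp [hv0]
  | succ N ih =>
    intro v hv
    have h1 : (E ^ (N + 1 + 1)) (G v) = (E ^ (N + 1)) ((E * G) v) := by
      rw [pow_succ, Module.End.mul_apply, Module.End.mul_apply]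
    rw [h1, h]
    simp only [LinearMap.add_apply, LinearMap.smul_apply, Module.End.mul_apply, map_add, map_smul]
    have hv' : (E ^ N) (E v) = 0 := by
      rw [← Module.End.mul_apply, ← pow_succ]; exact hv
    rw [ih (E v) hv', nil_comm E D t hD hv]
    simp

lemma nil_serre {V : Type} [AddCommGroup V] [Module KK V] (E G : Module.End KK V) (b : ℕ)
    (hb : 1 ≤ b) (μ : ℕ → KK) (hμ : μ b ≠ 0)
    (hs : ∑ k ∈ Finset.range (b + 1), μ k • (E ^ k * G * E ^ (b - k)) = 0)
    {N : ℕ} {v : V} (hv : (E ^ N) v = 0) : (E ^ (b * N)) (G v) = 0 := by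
  have htop : E ^ b * G =
      (μ b)⁻¹ • (- ∑ k ∈ Finset.range b, μ k • (E ^ k * G * E ^ (b - k))) := by
    rw [Finset.sum_range_succ] at hs
    have h2 : μ b • (E ^ b * G * E ^ (b - b)) =
        - ∑ k ∈ Finset.range b, μ k • (E ^ k * G * E ^ (b - k)) :=
      eq_neg_of_add_eq_zero_right hs
    rw [Nat.sub_self, pow_zero, mul_one] at h2
    rw [← h2, inv_smul_smul₀ hμ]
  have main : ∀ t c m, N ≤ c + t → b * t ≤ m → (E ^ m) (G ((E ^ c) v)) = 0 := by
    intro t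
    induction t with
    | zero =>
      intro c m hc _
      have hcv : (E ^ c) v = 0 := pow_app_zero_mono E (by omega) hv
      rw [hcv, map_zero, map_zero]
    | succ t ih =>
      intro c m hc hm
      have hbm : b ≤ m := le_trans (Nat.le_mul_of_pos_right b (by omega)) hm
      obtain ⟨p, rfl⟩ : ∃ p, m = p + b := ⟨m - b, by omega⟩
      have h5 : b * t + b ≤ p + b := by
        calc b * t + b = b * (t + 1) := (Nat.mul_succ b t).symm
        _ ≤ p + b := hm
      have hbt : b * t ≤ p := Nat.le_of_add_le_add_right h5
      have hop : E ^ (p + b) * G =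
          (μ b)⁻¹ • - ∑ k ∈ Finset.range b, μ k • (E ^ (p + k) * G * E ^ (b - k)) := by
        rw [pow_add, mul_assoc, htop, mul_smul_comm, mul_neg, Finset.mul_sum]
        congr 2
        apply Finset.sum_congr rfl
        intro k _
        rw [mul_smul_comm, ← mul_assoc, ← mul_assoc, ← pow_add]
      rw [← Module.End.mul_apply, hop]
      simp only [LinearMap.smul_apply, LinearMap.neg_apply, LinearMap.coe_sum,
        Finset.sum_apply, Module.End.mul_apply]
      refine smul_eq_zero_of_right _ ?_
      rw [neg_eq_zero]
      apply Finset.sum_eq_zero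
      intro k hk
      have hkb : k < b := Finset.mem_range.1 hk
      have e1 : (E ^ (b - k)) ((E ^ c) v) = (E ^ ((b - k) + c)) v := by
        rw [pow_add E (b - k) c, Module.End.mul_apply]
      rw [e1, ih ((b - k) + c) (p + k) (by omega)
        (le_trans hbt (Nat.le_add_right _ _)), smul_zero]
  have := main N 0 (b * N) (by omega) (le_refl _)
  simpa using this

section BthLemmas

variable (A : I → I → ℤ) (θ : I → I)

lemma map_serreElt {R S : Type} [Ring R] [Algebra KK R] [Ring S] [Algebra KK S]
    (f : R →ₐ[KK] S) (x : I → R) (i j : I) :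
    f (serreElt A x i j) = serreElt A (fun k => f (x k)) i j := by
  simp [serreElt, map_sum, map_mul, map_pow]

lemma bth_EF (i j : I) :
    Eg A θ i * Fg A θ j = qZ (-(A i j)) • (Fg A θ j * Eg A θ i) +
      (if i = j then 1 else 0) + (if θ i = j then Tg A θ i else 0) := by
  have h := RingQuot.mkAlgHom_rel KK (BRel.EF (A := A) (θ := θ) i j)
  simp only [map_mul, map_add, map_smul, map_one, map_zero,
    apply_ite (RingQuot.mkAlgHom KK (BRel A θ))] at h
  simpa [Eg, Fg, Tg] using h

lemma bth_TE (i j : I) :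
    Tg A θ i * Eg A θ j = qZ (A i j + A (θ i) j) • (Eg A θ j * Tg A θ i) := by
  have h := RingQuot.mkAlgHom_rel KK (BRel.TE (A := A) (θ := θ) i j)
  simp only [map_mul, map_smul] at h
  simpa [Eg, Tg] using h

lemma bth_T_Ti (i : I) : Tg A θ i * Tig A θ i = 1 := by
  have h := RingQuot.mkAlgHom_rel KK (BRel.T_inv_right (A := A) (θ := θ) i)
  simp only [map_mul, map_one] at h
  simpa [Tg, Tig] using h

lemma bth_Ti_T (i : I) : Tig A θ i * Tg A θ i = 1 := by
  have h := RingQuot.mkAlgHom_rel KK (BRel.T_inv_left (A := A) (θ := θ) i)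
  simp only [map_mul, map_one] at h
  simpa [Tg, Tig] using h

lemma bth_serreE (i j : I) (hij : i ≠ j) :
    serreElt A (fun k => Eg A θ k) i j = 0 := by
  have h := RingQuot.mkAlgHom_rel KK (BRel.Eserre (A := A) (θ := θ) i j hij)
  rw [map_serreElt A (RingQuot.mkAlgHom KK (BRel A θ)) (fun k => bE k) i j, map_zero] at h
  exact h

variable (M : BRep A θ)

lemma end_EF (i j : I) :
    M.rho (Eg A θ i) * M.rho (Fg A θ j) =
      qZ (-(A i j)) • (M.rho (Fg A θ j) * M.rho (Eg A θ i)) +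
      (if i = j then 1 else 0) + (if θ i = j then M.rho (Tg A θ i) else 0) := by
  have h := congrArg M.rho (bth_EF A θ i j)
  simpa [map_mul, map_add, map_smul, map_one, map_zero, apply_ite M.rho] using h

lemma end_TE (i j : I) :
    M.rho (Tg A θ i) * M.rho (Eg A θ j) =
      qZ (A i j + A (θ i) j) • (M.rho (Eg A θ j) * M.rho (Tg A θ i)) := by
  have h := congrArg M.rho (bth_TE A θ i j)
  simpa [map_mul, map_smul] using h

lemma end_ET (i j : I) :
    M.rho (Eg A θ j) * M.rho (Tg A θ i) =
      qZ (-(A i j + A (θ i) j)) • (M.rho (Tg A θ i) * M.rho (Eg A θ j)) := by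
  have h := end_TE A θ M i j
  have hc : qZ (-(A i j + A (θ i) j)) * qZ (A i j + A (θ i) j) = 1 := by
    rw [← qZ_add]
    have h0 : -(A i j + A (θ i) j) + (A i j + A (θ i) j) = 0 := by ring
    rw [h0, qZ_zero]
  rw [h, smul_smul, hc, one_smul]

lemma end_ETi (i j : I) :
    M.rho (Eg A θ j) * M.rho (Tig A θ i) =
      qZ (A i j + A (θ i) j) • (M.rho (Tig A θ i) * M.rho (Eg A θ j)) := by
  have h1 : M.rho (Tig A θ i) * M.rho (Tg A θ i) = 1 := by
    rw [← map_mul, bth_Ti_T, map_one]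
  have h2 : M.rho (Tg A θ i) * M.rho (Tig A θ i) = 1 := by
    rw [← map_mul, bth_T_Ti, map_one]
  have h := end_TE A θ M i j
  have key : M.rho (Eg A θ j) * M.rho (Tig A θ i) =
      M.rho (Tig A θ i) * (M.rho (Tg A θ i) * M.rho (Eg A θ j)) * M.rho (Tig A θ i) := by
    rw [← mul_assoc, h1, one_mul]
  rw [key, h, mul_smul_comm, smul_mul_assoc]
  congr 1
  rw [mul_assoc, mul_assoc, h2, mul_one]

lemma end_serreE (i j : I) (hij : i ≠ j) :
    serreElt A (fun k => M.rho (Eg A θ k)) i j = 0 := by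
  have h := congrArg M.rho (bth_serreE A θ i j hij)
  rw [map_serreElt A M.rho (fun k => Eg A θ k) i j, map_zero] at h
  exact h

end BthLemmas


theorem stmt11 (A : I → I → ℤ) (θ : I → I) (hA : IsCartan A) (hθ : IsTheta A θ)
    (hfree : ∀ i : I, θ i ≠ i)
    (lam : I → ℤ) (hlam : IsDomWt A θ lam)
    (M : BRep A θ) (hM : IsVtheta A θ lam M) :
    ∀ (i : I) (u : M.carrier),
      ∃! c : ℕ →₀ M.carrier,
        (∀ n : ℕ, M.rho (Eg A θ i) (c n) = 0) ∧
        u = c.sum fun n x => Fpow lam M i n x := by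
  obtain ⟨hE0, hT0, hgen, hhw⟩ := hM
  obtain ⟨hsym, hpos, hdvd, hoff, hdvd2⟩ := hA
  intro i u
  set E := M.rho (Eg A θ i) with hEdef
  set F := M.rho (Fg A θ i) with hFdef
  set d : ℤ := A i i / 2 with hddef
  have h2d : 2 * d = A i i := Int.mul_ediv_cancel' (hdvd i)
  have hd : 0 < d := by have h1 := hpos i; omega
  have hEF : E * F = qZ (-(2 * d)) • (F * E) + 1 := by
    have h := end_EF A θ M i i
    rw [if_pos rfl, if_neg (hfree i)] at h
    rw [h2d]
    simpa using h
  -- local nilpotency of E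
  have hnil : ∀ v : M.carrier, ∃ N, (E ^ N) v = 0 := by
    let W : Submodule KK M.carrier :=
      { carrier := {v | ∃ N, (E ^ N) v = 0}
        add_mem' := by
          rintro a b ⟨Na, ha⟩ ⟨Nb, hb⟩
          exact ⟨max Na Nb, by rw [map_add, pow_app_zero_mono E (le_max_left _ _) ha,
            pow_app_zero_mono E (le_max_right _ _) hb, add_zero]⟩
        zero_mem' := ⟨0, by simp⟩
        smul_mem' := by
          rintro cc a ⟨Na, ha⟩
          exact ⟨Na, by rw [map_smul, ha, smul_zero]⟩ }
    have hWtop : W = ⊤ := by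
      apply hgen
      · intro x w hw
        obtain ⟨y, rfl⟩ := RingQuot.mkAlgHom_surjective KK (BRel A θ) x
        refine FreeAlgebra.induction KK (BGen I)
          (motive := fun y => ∀ w, w ∈ W → M.rho (RingQuot.mkAlgHom KK (BRel A θ) y) w ∈ W)
          ?_ ?_ ?_ ?_ y w hw
        · intro r w hw
          rw [AlgHom.commutes, AlgHom.commutes, Module.algebraMap_end_apply]
          exact W.smul_mem r hw
        · intro g w hw
          obtain ⟨N, hN⟩ := hw
          cases g with
          | E j =>
            by_cases hji : j = i
            · subst hji
              refine ⟨N + 1, ?_⟩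
              show (E ^ (N + 1)) (E w) = 0
              rw [← Module.End.mul_apply, ← pow_succ]
              exact pow_app_zero_mono E (by omega) hN
            · have hij : i ≠ j := Ne.symm hji
              have hAij : A i j ≤ 0 := hoff i j hij
              have hq : A i i * (2 * A i j / A i i) = 2 * A i j :=
                Int.mul_ediv_cancel' (hdvd2 i j)
              have hqle : 2 * A i j / A i i ≤ 0 := by nlinarith [hpos i]
              have hb : 1 ≤ serreN A i j := by
                unfold serreN; omega
              have hs := end_serreE A θ M i j hij
              simp only [serreElt] at hs
              refine ⟨serreN A i j * N, ?_⟩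
              exact nil_serre E (M.rho (Eg A θ j)) (serreN A i j) hb
                (fun k => (-1 : KK) ^ k * (qFact (A i i / 2) k)⁻¹ *
                  (qFact (A i i / 2) (serreN A i j - k))⁻¹)
                (by
                  simp only [Nat.sub_self, qFact_zero, inv_one, mul_one]
                  exact mul_ne_zero (pow_ne_zero _ (neg_ne_zero.2 one_ne_zero))
                    (inv_ne_zero (qFact_ne_zero hd _)))
                hs hN
          | F j =>
            have h := end_EF A θ M i j
            rw [add_assoc] at h
            have hD : ∃ t : KK, E * ((if i = j then 1 else 0) +
                (if θ i = j then M.rho (Tg A θ i) else 0)) =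
                t • (((if i = j then 1 else 0) +
                  (if θ i = j then M.rho (Tg A θ i) else 0)) * E) := by
              by_cases hij : i = j
              · have hθj : ¬ θ i = j := by rw [← hij]; exact hfree i
                refine ⟨1, ?_⟩
                rw [if_pos hij, if_neg hθj]
                simp
              · by_cases hθj : θ i = j
                · refine ⟨qZ (-(A i i + A (θ i) i)), ?_⟩
                  rw [if_neg hij, if_pos hθj, zero_add]
                  exact end_ET A θ M i i
                · refine ⟨1, ?_⟩
                  rw [if_neg hij, if_neg hθj]
                  simp
            obtain ⟨t, hDt⟩ := hD
            exact ⟨N + 1, nil_D E (M.rho (Fg A θ j)) _ _ t h hDt N w hN⟩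
          | T j =>
            exact ⟨N, nil_comm E (M.rho (Tg A θ j)) _ (end_ET A θ M j i) hN⟩
          | Ti j =>
            exact ⟨N, nil_comm E (M.rho (Tig A θ j)) _ (end_ETi A θ M j i) hN⟩
        · intro a b iha ihb w hw
          rw [map_mul, map_mul, Module.End.mul_apply]
          exact iha _ (ihb w hw)
        · intro a b iha ihb w hw
          rw [map_add, map_add, LinearMap.add_apply]
          exact W.add_mem (iha w hw) (ihb w hw)
      · exact ⟨1, by rw [pow_one]; exact hE0 i⟩
    intro v
    have hv : v ∈ W := hWtop ▸ Submodule.mem_top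
    exact hv
  -- existence
  obtain ⟨N0, hN0⟩ := hnil u
  have hN0' : (E ^ (N0 + 1)) u = 0 := pow_app_zero_mono E (Nat.le_succ N0) hN0
  obtain ⟨f, hf1, hf2, hf3⟩ := exist_aux E F d hd hEF N0 u hN0'
  set c : ℕ →₀ M.carrier := Finsupp.onFinset (Finset.range (N0 + 1)) f
    (fun n hn => Finset.mem_range.2 (by by_contra hc; exact hn (hf2 n (by omega)))) with hcdef
  have hcapp : ∀ n, c n = f n := fun n => rfl
  have hcsum : u = c.sum fun n x => Fpow lam M i n x := by
    rw [Finsupp.sum_of_support_subset _ Finsupp.support_onFinset_subset _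
      (fun n _ => map_zero (Fpow lam M i n))]
    simp only [Finsupp.onFinset_apply]
    exact hf3
  refine ⟨c, ⟨fun n => hf1 n, hcsum⟩, ?_⟩
  rintro c' ⟨hc1, hc2⟩
  have hc2' : u = c'.sum fun n x => Fd F d n x := hc2
  have hcsum' : u = c.sum fun n x => Fd F d n x := hcsum
  have hdiff : c' - c = 0 := by
    apply uniq_finsupp E F d hd hEF
    · intro n
      rw [Finsupp.sub_apply, map_sub, hc1 n]
      show 0 - E (f n) = 0
      rw [hf1 n, sub_zero]
    · rw [Finsupp.sum_sub_index (fun a b₁ b₂ => map_sub _ _ _), ← hc2', ← hcsum', sub_self]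
  exact eq_of_sub_eq_zero hdiff
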